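/- For the Marchenko–Pastur law H with γ > 1 and σ > 0, the function ρ ↦ ∫ σ⁴/((1 − ρs)²(s + σ²)) dH(s) is continuous and strictly increasing on [0, 1/λ₊), equals ε_σ² = ∫ σ⁴/(s+σ²) dH(s) at ρ = 0, and tends to +∞ as ρ ↑ 1/λ₊. Consequently, for every ε² ≥ ε_σ², there exists a unique ρ(ε) ∈ [0, 1/λ₊) solving ∫ σ⁴/((1 − ρs)²(s + σ²)) dH(s) = ε². -/

import Mathlib

open MeasureTheory Real Filter
open scoped ENNReal

/-- Lower edge `λ₋ = (1 − 1/√γ)²` of the Marchenko–Pastur law. -/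
noncomputable def lamM (γ : ℝ) : ℝ := (1 - 1 / Real.sqrt γ) ^ 2

/-- Upper edge `λ₊ = (1 + 1/√γ)²` of the Marchenko–Pastur law. -/
noncomputable def lamP (γ : ℝ) : ℝ := (1 + 1 / Real.sqrt γ) ^ 2

/-- The Marchenko–Pastur law with aspect ratio `γ > 1`:
`dH(s) = (γ/(2π))·√((λ₊ − s)(s − λ₋))/s · 𝟙_{[λ₋,λ₊]}(s) ds`. -/
noncomputable def MPlaw (γ : ℝ) : Measure ℝ :=
  MeasureTheory.volume.withDensity fun s =>
    ENNReal.ofReal (if lamM γ ≤ s ∧ s ≤ lamP γ then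
      γ / (2 * Real.pi) * Real.sqrt ((lamP γ - s) * (s - lamM γ)) / s else 0)

noncomputable def dens (γ : ℝ) (s : ℝ) : ℝ :=
  if lamM γ ≤ s ∧ s ≤ lamP γ then
    γ / (2 * Real.pi) * Real.sqrt ((lamP γ - s) * (s - lamM γ)) / s else 0

lemma MPlaw_eq (γ : ℝ) :
    MPlaw γ = MeasureTheory.volume.withDensity fun s => ENNReal.ofReal (dens γ s) := rfl

section basic

variable {γ : ℝ}

lemma sqrt_gamma_gt (hγ : 1 < γ) : 1 < Real.sqrt γ := by
  have h : (1:ℝ) = Real.sqrt 1 := (Real.sqrt_one).symm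
  rw [h]
  exact Real.sqrt_lt_sqrt zero_le_one hγ

lemma inv_sqrt_lt (hγ : 1 < γ) : 1 / Real.sqrt γ < 1 := by
  have h := sqrt_gamma_gt hγ
  rw [div_lt_one (by linarith)]; exact h

lemma inv_sqrt_pos (hγ : 1 < γ) : 0 < 1 / Real.sqrt γ := by
  have h := sqrt_gamma_gt hγ
  positivity

lemma lamM_pos (hγ : 1 < γ) : 0 < lamM γ := by
  have h1 := inv_sqrt_lt hγ
  have : 0 < 1 - 1 / Real.sqrt γ := by linarith
  unfold lamM; positivity

lemma lamP_pos (hγ : 1 < γ) : 0 < lamP γ := by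
  have h1 := inv_sqrt_pos hγ
  have : 0 < 1 + 1 / Real.sqrt γ := by linarith
  unfold lamP; positivity

lemma lamM_lt_lamP (hγ : 1 < γ) : lamM γ < lamP γ := by
  have h1 := inv_sqrt_lt hγ
  have h2 := inv_sqrt_pos hγ
  unfold lamM lamP
  have h3 : 0 ≤ 1 - 1 / Real.sqrt γ := by linarith
  have h4 : 1 - 1 / Real.sqrt γ < 1 + 1 / Real.sqrt γ := by linarith
  exact pow_lt_pow_left₀ h4 h3 (by norm_num)

lemma dens_nonneg (hγ : 1 < γ) (s : ℝ) : 0 ≤ dens γ s := by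
  unfold dens
  split_ifs with h
  · have hs : 0 ≤ s := le_trans (sq_nonneg _) h.1
    have : 0 ≤ γ := by linarith
    positivity
  · exact le_refl _

lemma dens_measurable : Measurable (dens γ) := by
  unfold dens
  exact Measurable.ite
    (measurableSet_le measurable_const measurable_id |>.inter
      (measurableSet_le measurable_id measurable_const))
    (((measurable_const.mul ((measurable_const.sub measurable_id).mul
      (measurable_id.sub measurable_const)).sqrt).div measurable_id))
    measurable_const

lemma ae_Icc : ∀ᵐ s ∂(MPlaw γ), s ∈ Set.Icc (lamM γ) (lamP γ) := by
  rw [ae_iff, MPlaw_eq]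
  have hset : {a | ¬ a ∈ Set.Icc (lamM γ) (lamP γ)} = (Set.Icc (lamM γ) (lamP γ))ᶜ := rfl
  rw [hset, withDensity_apply _ (measurableSet_Icc.compl)]
  have : ∀ s ∈ (Set.Icc (lamM γ) (lamP γ))ᶜ, ENNReal.ofReal (dens γ s) = 0 := by
    intro s hs
    have : ¬ (lamM γ ≤ s ∧ s ≤ lamP γ) := by simpa [Set.mem_Icc] using hs
    simp [dens, this]
  calc ∫⁻ s in (Set.Icc (lamM γ) (lamP γ))ᶜ, ENNReal.ofReal (dens γ s)
      = ∫⁻ _ in (Set.Icc (lamM γ) (lamP γ))ᶜ, (0:ℝ≥0∞) := by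
        apply setLIntegral_congr_fun measurableSet_Icc.compl this
    _ = 0 := by simp

lemma dens_le (hγ : 1 < γ) : ∀ s, dens γ s ≤ γ / (2 * Real.pi) * lamP γ / lamM γ := by
  intro s
  have ha := lamM_pos hγ
  have hb := lamP_pos hγ
  have hab := lamM_lt_lamP hγ
  have hγ0 : (0:ℝ) < γ := by linarith
  unfold dens
  split_ifs with h
  · obtain ⟨h1, h2⟩ := h
    have hsq : Real.sqrt ((lamP γ - s) * (s - lamM γ)) ≤ lamP γ := by
      have : (lamP γ - s) * (s - lamM γ) ≤ lamP γ * lamP γ := by nlinarith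
      calc Real.sqrt ((lamP γ - s) * (s - lamM γ)) ≤ Real.sqrt (lamP γ * lamP γ) :=
            Real.sqrt_le_sqrt this
        _ = lamP γ := Real.sqrt_mul_self hb.le
    have hs : 0 < s := lt_of_lt_of_le ha h1
    apply div_le_div₀ (by positivity) _ ha h1
    exact mul_le_mul_of_nonneg_left hsq (by positivity)
  · positivity

lemma MPlaw_finite (hγ : 1 < γ) : IsFiniteMeasure (MPlaw γ) := by
  constructor
  rw [MPlaw_eq, withDensity_apply _ MeasurableSet.univ, Measure.restrict_univ]
  set C := γ / (2 * Real.pi) * lamP γ / lamM γ with hC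
  have : ∀ s, ENNReal.ofReal (dens γ s) ≤
      (Set.Icc (lamM γ) (lamP γ)).indicator (fun _ => ENNReal.ofReal C) s := by
    intro s
    by_cases h : s ∈ Set.Icc (lamM γ) (lamP γ)
    · rw [Set.indicator_of_mem h]
      exact ENNReal.ofReal_le_ofReal (dens_le hγ s)
    · rw [Set.indicator_of_notMem h]
      have : ¬ (lamM γ ≤ s ∧ s ≤ lamP γ) := by simpa [Set.mem_Icc] using h
      simp [dens, this]
  calc ∫⁻ s, ENNReal.ofReal (dens γ s) ∂volume
      ≤ ∫⁻ s, (Set.Icc (lamM γ) (lamP γ)).indicator (fun _ => ENNReal.ofReal C) s ∂volume :=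
        lintegral_mono this
    _ = ENNReal.ofReal C * volume (Set.Icc (lamM γ) (lamP γ)) := by
        rw [lintegral_indicator measurableSet_Icc, setLIntegral_const]
    _ < ⊤ := by
        apply ENNReal.mul_lt_top ENNReal.ofReal_lt_top
        exact (by rw [Real.volume_Icc]; exact ENNReal.ofReal_lt_top)

/-- lower bound on the measure of a set where the density is bounded below -/
lemma MPlaw_set_lower {c d m : ℝ} (hm : 0 ≤ m)
    (h : ∀ s ∈ Set.Icc c d, m ≤ dens γ s) :
    ENNReal.ofReal m * volume (Set.Icc c d) ≤ MPlaw γ (Set.Icc c d) := by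
  rw [MPlaw_eq, withDensity_apply _ measurableSet_Icc, ← setLIntegral_const]
  exact setLIntegral_mono' measurableSet_Icc
    (fun s hs => ENNReal.ofReal_le_ofReal (h s hs))

end basic

noncomputable def gfun (σ ρ s : ℝ) : ℝ := σ ^ 4 / ((1 - ρ * s) ^ 2 * (s + σ ^ 2))

lemma gfun_meas (σ ρ : ℝ) : Measurable (gfun σ ρ) := by
  unfold gfun
  exact measurable_const.div
    (((measurable_const.sub (measurable_const.mul measurable_id)).pow_const 2).mul
      (measurable_id.add measurable_const))

section main

variable {γ σ : ℝ}

lemma one_sub_bound (hγ : 1 < γ) {ρ ρ₁ s : ℝ} (hρ : ρ ≤ ρ₁) (h0 : 0 ≤ ρ₁)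
    (h1 : ρ₁ * lamP γ < 1) (hs : s ∈ Set.Icc (lamM γ) (lamP γ)) :
    0 < 1 - ρ₁ * lamP γ ∧ 1 - ρ₁ * lamP γ ≤ 1 - ρ * s := by
  have ha := lamM_pos hγ
  have hs0 : 0 < s := lt_of_lt_of_le ha hs.1
  have e1 : ρ * s ≤ ρ₁ * s := mul_le_mul_of_nonneg_right hρ hs0.le
  have e2 : ρ₁ * s ≤ ρ₁ * lamP γ := mul_le_mul_of_nonneg_left hs.2 h0
  constructor <;> linarith

lemma gfun_nonneg (hγ : 1 < γ) (hσ : 0 < σ) (ρ : ℝ) {s : ℝ}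
    (hs : s ∈ Set.Icc (lamM γ) (lamP γ)) : 0 ≤ gfun σ ρ s := by
  have hs0 : 0 < s := lt_of_lt_of_le (lamM_pos hγ) hs.1
  unfold gfun
  have : (0:ℝ) < s + σ ^ 2 := by positivity
  positivity

lemma gfun_le (hγ : 1 < γ) (hσ : 0 < σ) {ρ ρ₁ s : ℝ} (hρ : ρ ≤ ρ₁) (h0 : 0 ≤ ρ₁)
    (h1 : ρ₁ * lamP γ < 1) (hs : s ∈ Set.Icc (lamM γ) (lamP γ)) :
    gfun σ ρ s ≤ σ ^ 4 / ((1 - ρ₁ * lamP γ) ^ 2 * σ ^ 2) := by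
  obtain ⟨hpos, hle⟩ := one_sub_bound hγ hρ h0 h1 hs
  have hs0 : 0 < s := lt_of_lt_of_le (lamM_pos hγ) hs.1
  have e1 : (1 - ρ₁ * lamP γ) ^ 2 ≤ (1 - ρ * s) ^ 2 := by nlinarith
  have e2 : σ ^ 2 ≤ s + σ ^ 2 := by linarith
  have hd : (0:ℝ) < (1 - ρ₁ * lamP γ) ^ 2 * σ ^ 2 := by positivity
  have hle2 : (1 - ρ₁ * lamP γ) ^ 2 * σ ^ 2 ≤ (1 - ρ * s) ^ 2 * (s + σ ^ 2) :=
    mul_le_mul e1 e2 (by positivity) (by positivity)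
  unfold gfun
  have hbig : (0:ℝ) < (1 - ρ * s) ^ 2 * (s + σ ^ 2) := hd.trans_le hle2
  gcongr

lemma gfun_integrable (hγ : 1 < γ) (hσ : 0 < σ) {ρ ρ₁ : ℝ} (hρ : ρ ≤ ρ₁) (h0 : 0 ≤ ρ₁)
    (h1 : ρ₁ * lamP γ < 1) : Integrable (gfun σ ρ) (MPlaw γ) := by
  haveI := MPlaw_finite hγ
  refine Integrable.mono' (integrable_const (σ ^ 4 / ((1 - ρ₁ * lamP γ) ^ 2 * σ ^ 2)))
    (gfun_meas σ ρ).aestronglyMeasurable ?_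
  filter_upwards [ae_Icc (γ := γ)] with s hs
  rw [Real.norm_eq_abs, abs_of_nonneg (gfun_nonneg hγ hσ ρ hs)]
  exact gfun_le hγ hσ hρ h0 h1 hs

lemma gfun_lt (hγ : 1 < γ) (hσ : 0 < σ) {ρ₁ ρ₂ s : ℝ} (h0 : 0 ≤ ρ₁) (h12 : ρ₁ < ρ₂)
    (hb : ρ₂ * lamP γ < 1) (hs : s ∈ Set.Icc (lamM γ) (lamP γ)) :
    gfun σ ρ₁ s < gfun σ ρ₂ s := by
  have hs0 : 0 < s := lt_of_lt_of_le (lamM_pos hγ) hs.1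
  have h2 : 0 < 1 - ρ₂ * s := by
    have := one_sub_bound hγ (le_refl ρ₂) (h0.trans h12.le) hb hs
    linarith [this.1, this.2]
  have h1 : 1 - ρ₂ * s < 1 - ρ₁ * s := by
    have := mul_lt_mul_of_pos_right h12 hs0
    linarith
  have hσs : (0:ℝ) < s + σ ^ 2 := by positivity
  have hA : (0:ℝ) < (1 - ρ₂ * s) ^ 2 * (s + σ ^ 2) := by positivity
  have hAB : (1 - ρ₂ * s) ^ 2 * (s + σ ^ 2) < (1 - ρ₁ * s) ^ 2 * (s + σ ^ 2) := by
    have := pow_lt_pow_left₀ h1 h2.le (n := 2) (by norm_num)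
    exact mul_lt_mul_of_pos_right this hσs
  unfold gfun
  exact div_lt_div_of_pos_left (by positivity) hA hAB

lemma MPlaw_Icc_pos (hγ : 1 < γ) : 0 < MPlaw γ (Set.Icc (lamM γ) (lamP γ)) := by
  set a := lamM γ
  set b := lamP γ
  have ha := lamM_pos hγ
  have hb := lamP_pos hγ
  have hab := lamM_lt_lamP hγ
  have hγ0 : (0:ℝ) < γ := by linarith
  set c := (3 * a + b) / 4 with hc
  set d := (a + 3 * b) / 4 with hd
  have hcd : c < d := by rw [hc, hd]; linarith
  set m := γ / (2 * Real.pi) * Real.sqrt ((b - d) * (c - a)) / b with hm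
  have hbd : (0:ℝ) < b - d := by rw [hd]; linarith
  have hca : (0:ℝ) < c - a := by rw [hc]; linarith
  have hmpos : 0 < m := by
    rw [hm]
    have hπ := Real.pi_pos
    have : 0 < Real.sqrt ((b - d) * (c - a)) := Real.sqrt_pos.2 (by positivity)
    positivity
  have hlow : ∀ s ∈ Set.Icc c d, m ≤ dens γ s := by
    intro s hsmem
    obtain ⟨hs1, hs2⟩ := hsmem
    have hsa : a ≤ s := by linarith [hca, hs1]
    have hsb : s ≤ b := by linarith [hbd, hs2]
    have hs0 : 0 < s := lt_of_lt_of_le ha hsa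
    have hif : dens γ s = γ / (2 * Real.pi) * Real.sqrt ((b - s) * (s - a)) / s := by
      unfold dens
      rw [if_pos ⟨hsa, hsb⟩]
    rw [hif, hm]
    have hsq : Real.sqrt ((b - d) * (c - a)) ≤ Real.sqrt ((b - s) * (s - a)) := by
      apply Real.sqrt_le_sqrt
      apply mul_le_mul (by linarith) (by linarith) hca.le (by linarith)
    have hπ := Real.pi_pos
    apply div_le_div₀ _ _ hs0 hsb
    · positivity
    · exact mul_le_mul_of_nonneg_left hsq (by positivity)
  calc (0:ℝ≥0∞) < ENNReal.ofReal m * volume (Set.Icc c d) := by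
        rw [Real.volume_Icc]
        exact ENNReal.mul_pos (ne_of_gt (ENNReal.ofReal_pos.2 hmpos))
          (ne_of_gt (ENNReal.ofReal_pos.2 (by linarith)))
    _ ≤ MPlaw γ (Set.Icc c d) := MPlaw_set_lower hmpos.le hlow
    _ ≤ MPlaw γ (Set.Icc a b) := measure_mono (Set.Icc_subset_Icc (by linarith) (by linarith))

end main

section main2

variable {γ σ : ℝ}

lemma F_contAt (hγ : 1 < γ) (hσ : 0 < σ) {ρ₀ : ℝ} (hρ₀ : ρ₀ ∈ Set.Ico 0 (1 / lamP γ)) :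
    ContinuousAt (fun ρ => ∫ s, gfun σ ρ s ∂(MPlaw γ)) ρ₀ := by
  haveI := MPlaw_finite hγ
  have hb := lamP_pos hγ
  set b := lamP γ
  obtain ⟨h0, hlt⟩ := hρ₀
  set ρ₁ := (ρ₀ + 1 / b) / 2 with hρ₁def
  have hρ₀ρ₁ : ρ₀ < ρ₁ := by rw [hρ₁def]; linarith
  have hρ₁lt : ρ₁ < 1 / b := by rw [hρ₁def]; linarith
  have hρ₁0 : 0 ≤ ρ₁ := by rw [hρ₁def]; positivity
  have hρ₁b : ρ₁ * b < 1 := (lt_div_iff₀ hb).1 hρ₁lt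
  apply continuousAt_of_dominated (bound := fun _ => σ ^ 4 / ((1 - ρ₁ * b) ^ 2 * σ ^ 2))
  · exact Eventually.of_forall fun ρ => (gfun_meas σ ρ).aestronglyMeasurable
  · filter_upwards [Iio_mem_nhds hρ₀ρ₁] with ρ hρ
    filter_upwards [ae_Icc (γ := γ)] with s hs
    rw [Real.norm_eq_abs, abs_of_nonneg (gfun_nonneg hγ hσ ρ hs)]
    exact gfun_le hγ hσ (le_of_lt hρ) hρ₁0 hρ₁b hs
  · exact integrable_const _
  · filter_upwards [ae_Icc (γ := γ)] with s hs
    have hρ₀b : ρ₀ * b < 1 := (lt_div_iff₀ hb).1 hlt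
    have hden := one_sub_bound hγ (le_refl ρ₀) h0 hρ₀b hs
    have hs0 : 0 < s := lt_of_lt_of_le (lamM_pos hγ) hs.1
    have hne : (1 - ρ₀ * s) ^ 2 * (s + σ ^ 2) ≠ 0 := by
      have h1 : 0 < 1 - ρ₀ * s := lt_of_lt_of_le hden.1 hden.2
      positivity
    exact ContinuousAt.div continuousAt_const
      ((((continuous_const.sub (continuous_id.mul continuous_const)).pow 2).mul
        continuous_const).continuousAt) hne

lemma F_strictMono (hγ : 1 < γ) (hσ : 0 < σ) :
    StrictMonoOn (fun ρ => ∫ s, gfun σ ρ s ∂(MPlaw γ)) (Set.Ico 0 (1 / lamP γ)) := by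
  haveI := MPlaw_finite hγ
  have hb := lamP_pos hγ
  intro ρ₁ h₁ ρ₂ h₂ h12
  have hρ₂b : ρ₂ * lamP γ < 1 := (lt_div_iff₀ hb).1 h₂.2
  have hρ₁b : ρ₁ * lamP γ < 1 := (lt_div_iff₀ hb).1 h₁.2
  have i₁ : Integrable (gfun σ ρ₁) (MPlaw γ) := gfun_integrable hγ hσ (le_refl ρ₁) h₁.1 hρ₁b
  have i₂ : Integrable (gfun σ ρ₂) (MPlaw γ) := gfun_integrable hγ hσ (le_refl ρ₂) h₂.1 hρ₂b
  have key : 0 < ∫ s, (gfun σ ρ₂ - gfun σ ρ₁) s ∂(MPlaw γ) := by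
    refine (integral_pos_iff_support_of_nonneg_ae ?_ (i₂.sub i₁)).2 ?_
    · filter_upwards [ae_Icc (γ := γ)] with s hs
      exact sub_nonneg.2 (gfun_lt hγ hσ h₁.1 h12 hρ₂b hs).le
    · refine lt_of_lt_of_le (MPlaw_Icc_pos hγ) (measure_mono ?_)
      intro s hs
      exact ne_of_gt (sub_pos.2 (gfun_lt hγ hσ h₁.1 h12 hρ₂b hs))
  simp only [Pi.sub_apply] at key
  rw [integral_sub i₂ i₁] at key
  show (∫ s, gfun σ ρ₁ s ∂(MPlaw γ)) < ∫ s, gfun σ ρ₂ s ∂(MPlaw γ)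
  linarith

end main2

section blowup

variable {γ σ : ℝ}

lemma F_tendsto (hγ : 1 < γ) (hσ : 0 < σ) :
    Tendsto (fun ρ => ∫ s, gfun σ ρ s ∂(MPlaw γ))
      (nhdsWithin (1 / lamP γ) (Set.Iio (1 / lamP γ))) atTop := by
  haveI := MPlaw_finite hγ
  have ha := lamM_pos hγ
  have hb := lamP_pos hγ
  have hab := lamM_lt_lamP hγ
  have hγ0 : (0:ℝ) < γ := by linarith
  have hπ := Real.pi_pos
  set a := lamM γ with haeq
  set b := lamP γ with hbeq
  set K₁ := γ / (2 * Real.pi) * Real.sqrt ((b - a) / 2) / b with hK₁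
  set K₂ := σ ^ 4 * b ^ 2 / (9 * (b + σ ^ 2)) with hK₂
  clear_value a b
  have hK₁0 : 0 < K₁ := by
    rw [hK₁]
    have : 0 < Real.sqrt ((b - a) / 2) := Real.sqrt_pos.2 (by linarith)
    positivity
  have hK₂0 : 0 < K₂ := by rw [hK₂]; positivity
  clear_value K₁ K₂
  rw [tendsto_atTop]
  intro M
  set M' := max M 1 with hM'
  have hM'0 : 0 < M' := lt_of_lt_of_le one_pos (le_max_right _ _)
  set K := K₁ * K₂ with hK
  have hK0 : 0 < K := mul_pos hK₁0 hK₂0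
  set t₀ := min ((b - a) / 4) ((K / M') ^ 2) with ht₀
  have ht₀0 : 0 < t₀ := lt_min (by linarith) (by positivity)
  clear_value M' K t₀
  have hρ₂lt : 1 / (b + t₀) < 1 / b := one_div_lt_one_div_of_lt hb (by linarith)
  have hρ₂0 : 0 < 1 / (b + t₀) := by positivity
  have h1 : ∀ᶠ ρ in nhdsWithin (1/b) (Set.Iio (1/b)), 1 / (b + t₀) < ρ :=
    eventually_nhdsWithin_of_eventually_nhds (eventually_gt_nhds hρ₂lt)
  filter_upwards [h1, self_mem_nhdsWithin] with ρ hρlow hρhigh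
  simp only [Set.mem_Iio] at hρhigh
  have hρ0 : 0 < ρ := lt_trans hρ₂0 hρlow
  have hρb : ρ * b < 1 := (lt_div_iff₀ hb).1 hρhigh
  set t := 1 / ρ - b with htdef
  have ht0 : 0 < t := by
    rw [htdef]
    have : b < 1 / ρ := (lt_div_iff₀ hρ0).2 (by linarith [mul_comm ρ b])
    linarith
  have htt₀ : t ≤ t₀ := by
    have h := one_div_lt_one_div_of_lt hρ₂0 hρlow
    rw [one_div_one_div] at h
    rw [htdef]; linarith
  have ht4 : t ≤ (b - a) / 4 := htt₀.trans (by rw [ht₀]; exact min_le_left _ _)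
  have hρt : 1 - ρ * b = ρ * t := by
    rw [htdef]; field_simp
  clear_value t
  set S := Set.Icc (b - 2 * t) (b - t) with hSdef
  -- density lower bound on S
  have hm₁ : ∀ s ∈ S, K₁ * Real.sqrt t ≤ dens γ s := by
    rintro s ⟨hs1, hs2⟩
    have hsa : a ≤ s := by linarith
    have hsb : s ≤ b := by linarith
    have hs0 : 0 < s := lt_of_lt_of_le ha hsa
    have hif : dens γ s = γ / (2 * Real.pi) * Real.sqrt ((b - s) * (s - a)) / s := by
      unfold dens
      rw [← haeq, ← hbeq, if_pos ⟨hsa, hsb⟩]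
    rw [hif]
    have hprod : (b - a) / 2 * t ≤ (b - s) * (s - a) := by
      have e1 : t ≤ b - s := by linarith
      have e2 : (b - a) / 2 ≤ s - a := by linarith
      nlinarith [mul_le_mul e2 e1 ht0.le (show (0:ℝ) ≤ s - a by linarith)]
    have hsq : Real.sqrt ((b - a) / 2 * t) ≤ Real.sqrt ((b - s) * (s - a)) :=
      Real.sqrt_le_sqrt hprod
    have hsplit : K₁ * Real.sqrt t = γ / (2 * Real.pi) * Real.sqrt ((b - a) / 2 * t) / b := by
      rw [hK₁, Real.sqrt_mul (by linarith) t]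
      ring
    rw [hsplit]
    apply div_le_div₀ _ _ hs0 hsb
    · positivity
    · exact mul_le_mul_of_nonneg_left hsq (by positivity)
  -- integrand lower bound on S
  have hm₂ : ∀ s ∈ S, K₂ / t ^ 2 ≤ gfun σ ρ s := by
    rintro s ⟨hs1, hs2⟩
    have hsa : a ≤ s := by linarith
    have hsb : s ≤ b := by linarith
    have hs0 : 0 < s := lt_of_lt_of_le ha hsa
    have hbs1 : b - s ≤ 2 * t := by linarith
    have hbs2 : t ≤ b - s := by linarith
    have key : 1 - ρ * s ≤ 3 * (ρ * t) := by
      have e1 : ρ * (b - s) ≤ ρ * (2 * t) := mul_le_mul_of_nonneg_left hbs1 hρ0.le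
      have expand : ρ * (b - s) = ρ * b - ρ * s := by ring
      have expand2 : ρ * (2 * t) = 2 * (ρ * t) := by ring
      rw [expand, expand2] at e1
      linarith [e1, hρt]
    have hup : 1 - ρ * s ≤ 3 * t / b := by
      rw [le_div_iff₀ hb]
      have e3 : (1 - ρ * s) * b ≤ 3 * (ρ * t) * b := mul_le_mul_of_nonneg_right key hb.le
      have e4 : 3 * (ρ * t) * b = 3 * t * (ρ * b) := by ring
      have e5 : 3 * t * (ρ * b) ≤ 3 * t * 1 := by
        apply mul_le_mul_of_nonneg_left hρb.le (by positivity)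
      linarith [e3, e4.le, e4.ge, e5]
    have hlow : 0 < 1 - ρ * s := by
      have f2 : 0 < ρ * t := mul_pos hρ0 ht0
      have f3 : 0 ≤ ρ * (b - s) := mul_nonneg hρ0.le (by linarith)
      have f4 : ρ * (b - s) = ρ * b - ρ * s := by ring
      rw [f4] at f3
      linarith [f2, f3, hρt]
    have hdpos : 0 < (1 - ρ * s) ^ 2 * (s + σ ^ 2) := by positivity
    have hdenle : (1 - ρ * s) ^ 2 * (s + σ ^ 2) ≤ (3 * t / b) ^ 2 * (b + σ ^ 2) := by
      apply mul_le_mul (pow_le_pow_left₀ hlow.le hup 2) (by linarith) (by positivity) (by positivity)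
    have heq : σ ^ 4 / ((3 * t / b) ^ 2 * (b + σ ^ 2)) = K₂ / t ^ 2 := by
      rw [hK₂]
      have hbσ : (0:ℝ) < b + σ ^ 2 := by positivity
      field_simp
      ring
    calc K₂ / t ^ 2 = σ ^ 4 / ((3 * t / b) ^ 2 * (b + σ ^ 2)) := heq.symm
      _ ≤ σ ^ 4 / ((1 - ρ * s) ^ 2 * (s + σ ^ 2)) :=
          div_le_div_of_nonneg_left (by positivity) hdpos hdenle
      _ = gfun σ ρ s := rfl
  -- chain of inequalities
  have hInt : Integrable (gfun σ ρ) (MPlaw γ) :=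
    gfun_integrable hγ hσ (le_refl ρ) hρ0.le (by rw [← hbeq]; exact hρb)
  have hae : 0 ≤ᵐ[MPlaw γ] gfun σ ρ := by
    filter_upwards [ae_Icc (γ := γ)] with s hs using gfun_nonneg hγ hσ ρ hs
  have step1 : ∫ s in S, gfun σ ρ s ∂(MPlaw γ) ≤ ∫ s, gfun σ ρ s ∂(MPlaw γ) :=
    setIntegral_le_integral hInt hae
  have step2 : ∫ _ in S, (K₂ / t ^ 2) ∂(MPlaw γ) ≤ ∫ s in S, gfun σ ρ s ∂(MPlaw γ) :=
    setIntegral_mono_on (integrableOn_const (measure_ne_top _ _) enorm_ne_top)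
      hInt.integrableOn measurableSet_Icc hm₂
  have step3 : ∫ _ in S, (K₂ / t ^ 2) ∂(MPlaw γ) = (MPlaw γ S).toReal * (K₂ / t ^ 2) := by
    rw [setIntegral_const, smul_eq_mul, measureReal_def]
  have hvol : volume S = ENNReal.ofReal t := by
    rw [hSdef, Real.volume_Icc]
    congr 1
    ring
  have step4 : K₁ * Real.sqrt t * t ≤ (MPlaw γ S).toReal := by
    have hmeaslow : ENNReal.ofReal (K₁ * Real.sqrt t) * volume S ≤ MPlaw γ S :=
      MPlaw_set_lower (by positivity) hm₁
    rw [hvol, ← ENNReal.ofReal_mul (by positivity)] at hmeaslow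
    have := ENNReal.toReal_mono (measure_ne_top _ _) hmeaslow
    rwa [ENNReal.toReal_ofReal (by positivity)] at this
  have step5 : (K₁ * Real.sqrt t * t) * (K₂ / t ^ 2) ≤ (MPlaw γ S).toReal * (K₂ / t ^ 2) :=
    mul_le_mul_of_nonneg_right step4 (by positivity)
  -- final arithmetic
  set u := Real.sqrt t with hu_def
  have hu : 0 < u := Real.sqrt_pos.2 ht0
  have hut : t = u ^ 2 := (Real.sq_sqrt ht0.le).symm
  clear_value u
  have heqfin : (K₁ * u * t) * (K₂ / t ^ 2) = K / u := by
    rw [hut, hK]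
    field_simp
  have huK : u ≤ K / M' := by
    have h1 : u ≤ Real.sqrt t₀ := by rw [hu_def]; exact Real.sqrt_le_sqrt htt₀
    have h2 : Real.sqrt t₀ ≤ Real.sqrt ((K / M') ^ 2) :=
      Real.sqrt_le_sqrt (by rw [ht₀]; exact min_le_right _ _)
    have h3 : Real.sqrt ((K / M') ^ 2) = K / M' := Real.sqrt_sq (by positivity)
    linarith
  have hMK : M ≤ K / u := by
    have h4 : u * M' ≤ K := (le_div_iff₀ hM'0).1 huK
    have h5 : M' ≤ K / u := (le_div_iff₀ hu).2 (by rw [mul_comm]; exact h4)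
    have h6 : M ≤ M' := by rw [hM']; exact le_max_left _ _
    linarith
  linarith [step1, step2, step3.symm.le, step5, heqfin, hMK]

end blowup

theorem stmt12 (γ σ : ℝ) (hγ : 1 < γ) (hσ : 0 < σ) :
    let F : ℝ → ℝ := fun ρ => ∫ s, σ ^ 4 / ((1 - ρ * s) ^ 2 * (s + σ ^ 2)) ∂(MPlaw γ)
    ContinuousOn F (Set.Ico 0 (1 / lamP γ)) ∧
    StrictMonoOn F (Set.Ico 0 (1 / lamP γ)) ∧
    F 0 = ∫ s, σ ^ 4 / (s + σ ^ 2) ∂(MPlaw γ) ∧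
    Tendsto F (nhdsWithin (1 / lamP γ) (Set.Iio (1 / lamP γ))) atTop ∧
    ∀ ε2 : ℝ, (∫ s, σ ^ 4 / (s + σ ^ 2) ∂(MPlaw γ)) ≤ ε2 →
      ∃! ρ : ℝ, ρ ∈ Set.Ico 0 (1 / lamP γ) ∧ F ρ = ε2 := by
  intro F
  have hb := lamP_pos hγ
  have hFg : F = fun ρ => ∫ s, gfun σ ρ s ∂(MPlaw γ) := rfl
  have hcont : ContinuousOn F (Set.Ico 0 (1 / lamP γ)) := by
    rw [hFg]
    exact fun ρ₀ hρ₀ => (F_contAt hγ hσ hρ₀).continuousWithinAt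
  have hmono : StrictMonoOn F (Set.Ico 0 (1 / lamP γ)) := by
    rw [hFg]; exact F_strictMono hγ hσ
  have hF0 : F 0 = ∫ s, σ ^ 4 / (s + σ ^ 2) ∂(MPlaw γ) := by
    show (∫ s, σ ^ 4 / ((1 - 0 * s) ^ 2 * (s + σ ^ 2)) ∂(MPlaw γ)) = _
    simp
  have htend : Tendsto F (nhdsWithin (1 / lamP γ) (Set.Iio (1 / lamP γ))) atTop := by
    rw [hFg]; exact F_tendsto hγ hσ
  refine ⟨hcont, hmono, hF0, htend, ?_⟩
  intro ε2 hε2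
  rw [← hF0] at hε2
  have hev : ∀ᶠ ρ' in nhdsWithin (1 / lamP γ) (Set.Iio (1 / lamP γ)),
      (ε2 ≤ F ρ' ∧ 0 < ρ') ∧ ρ' < 1 / lamP γ := by
    filter_upwards [htend.eventually_ge_atTop ε2,
      eventually_nhdsWithin_of_eventually_nhds
        (eventually_gt_nhds (by positivity : (0:ℝ) < 1 / lamP γ)),
      self_mem_nhdsWithin] with ρ' h1 h2 h3
    exact ⟨⟨h1, h2⟩, h3⟩
  obtain ⟨ρ', ⟨hge, h0'⟩, hlt'⟩ := hev.exists
  have hsub : Set.Icc (0:ℝ) ρ' ⊆ Set.Ico 0 (1 / lamP γ) :=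
    fun x hx => ⟨hx.1, lt_of_le_of_lt hx.2 hlt'⟩
  have hivt : Set.Icc (F 0) (F ρ') ⊆ F '' Set.Icc 0 ρ' :=
    intermediate_value_Icc h0'.le (hcont.mono hsub)
  obtain ⟨ρ, hρIcc, hFρ⟩ := hivt ⟨hε2, hge⟩
  have hρmem : ρ ∈ Set.Ico 0 (1 / lamP γ) := hsub hρIcc
  exact ⟨ρ, ⟨hρmem, hFρ⟩, fun y hy => hmono.injOn hy.1 hρmem (hy.2.trans hFρ.symm)⟩
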